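/- Let 0 < |n| < 1, α ∈ (0,1] and p > 1. The matrix Q_{α,p}(v,u) is positive semidefinite for all u, v > 0 if and only if (α,p) ∈ K_{|n|}. -/

import Mathlib

open MeasureTheory Set Filter Topology

noncomputable section

/-- The critical exponent `P₋(α) = 1 + (2/n²)(1-α)(α - √(α²-n²))`. -/
def Pminus (n a : ℝ) : ℝ := 1 + (2 / n ^ 2) * (1 - a) * (a - Real.sqrt (a ^ 2 - n ^ 2))

/-- The critical exponent `P₊(α) = 1 + (2/n²)(1-α)(α + √(α²-n²))`. -/
def Pplus (n a : ℝ) : ℝ := 1 + (2 / n ^ 2) * (1 - a) * (a + Real.sqrt (a ^ 2 - n ^ 2))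

/-- The admissible set `K_{|n|}` of pairs `(α,p)`. -/
def Kset (n : ℝ) : Set (ℝ × ℝ) :=
  if n = 0 then {q | 0 < q.1 ∧ q.1 ≤ 1 ∧ 1 ≤ q.1 * q.2}
  else {q | |n| ≤ q.1 ∧ q.1 ≤ 1 ∧ Pminus n q.1 ≤ q.2 ∧ q.2 ≤ Pplus n q.1}

/-- The symmetric matrix `Q_{α,p}(v,u)`, with `γ = n/α`, `Γ = (1-α)/(α(p-1))`,
and the convention `Q_{1,1} = 0`. -/
def Qmat (n a p v u : ℝ) : Matrix (Fin 2) (Fin 2) ℝ :=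
  if a = 1 ∧ p = 1 then 0 else
  (p - 1) • !![v ^ (n / a) * (1 + ((1 - a) / (a * (p - 1))) * (u / v - 1)),
      -(v ^ (n / a) + u ^ (n / a)) / 2;
      -(v ^ (n / a) + u ^ (n / a)) / 2,
      u ^ (n / a) * (1 + ((1 - a) / (a * (p - 1))) * (v / u - 1))]

/-- The symmetric matrix `M_{α,p}`, with `γ = n/α`, `Γ = (1-α)/(α(p-1))`,
and the convention `M_{1,1} = 0`. -/
def Mmat (n a p : ℝ) : Matrix (Fin 2) (Fin 2) ℝ :=
  if a = 1 ∧ p = 1 then 0 else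
  (p - 1) • !![(1 : ℝ), -((1 - a) / (a * (p - 1))) + (n / a) / 2;
      -((1 - a) / (a * (p - 1))) + (n / a) / 2,
      ((1 - a) / (a * (p - 1))) * (1 - n / a)]

/-! ### Auxiliary lemmas -/

lemma sinh_mul_le (c : ℝ) (hc0 : 0 ≤ c) (hc1 : c ≤ 1) {x : ℝ} (hx : 0 ≤ x) :
    Real.sinh (c * x) ≤ c * Real.sinh x := by
  have hf : ∀ y : ℝ, HasDerivAt (fun y => c * Real.sinh y - Real.sinh (c * y))
      (c * Real.cosh y - Real.cosh (c * y) * (c * 1)) y := by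
    intro y
    have h2 : HasDerivAt (fun y : ℝ => c * y) (c * 1) y := (hasDerivAt_id y).const_mul c
    exact ((Real.hasDerivAt_sinh y).const_mul c).sub ((Real.hasDerivAt_sinh (c * y)).comp y h2)
  have hmono : MonotoneOn (fun y => c * Real.sinh y - Real.sinh (c * y)) (Set.Ici 0) := by
    apply monotoneOn_of_deriv_nonneg (convex_Ici 0)
    · exact ((continuous_const.mul Real.continuous_sinh).sub
        (Real.continuous_sinh.comp (continuous_const.mul continuous_id))).continuousOn
    · intro y _
      exact (hf y).differentiableAt.differentiableWithinAt
    · intro y hy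
      rw [interior_Ici] at hy
      have hy' : 0 < y := hy
      rw [(hf y).deriv]
      have h1 : Real.cosh (c * y) ≤ Real.cosh y := by
        rw [Real.cosh_le_cosh, abs_of_nonneg (mul_nonneg hc0 hy'.le), abs_of_nonneg hy'.le]
        nlinarith
      nlinarith
  have h0 := hmono (Set.self_mem_Ici) (Set.mem_Ici.mpr hx) hx
  simp only [Real.sinh_zero, mul_zero, sub_zero] at h0
  linarith [h0]

lemma sinh_sq_le (γ s : ℝ) (hγ : γ ^ 2 ≤ 1) :
    Real.sinh (γ * s) ^ 2 ≤ γ ^ 2 * Real.sinh s ^ 2 := by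
  have habs : |γ| ≤ 1 := abs_le.mpr ⟨by nlinarith, by nlinarith⟩
  have h1 : |Real.sinh (γ * s)| ≤ |γ| * |Real.sinh s| := by
    rw [Real.abs_sinh, Real.abs_sinh, abs_mul]
    exact sinh_mul_le |γ| (abs_nonneg γ) habs (abs_nonneg s)
  calc Real.sinh (γ * s) ^ 2 = |Real.sinh (γ * s)| ^ 2 := (sq_abs _).symm
    _ ≤ (|γ| * |Real.sinh s|) ^ 2 := by
        exact pow_le_pow_left₀ (abs_nonneg _) h1 2
    _ = γ ^ 2 * Real.sinh s ^ 2 := by rw [mul_pow, sq_abs, sq_abs]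

lemma rpow_key {γ t : ℝ} (hγ : γ ^ 2 ≤ 1) (ht : 0 < t) :
    (t ^ γ - 1) ^ 2 ≤ γ ^ 2 * t ^ (γ - 1) * (t - 1) ^ 2 := by
  set s := Real.log t / 2 with hs
  have hrg : t ^ γ = Real.exp (γ * s) ^ 2 := by
    rw [Real.rpow_def_of_pos ht, ← Real.exp_nat_mul, hs]; ring_nf
  have sqE : Real.exp (2 * (γ * s)) = Real.exp (γ * s) ^ 2 := by
    rw [two_mul, Real.exp_add]; ring
  have sqF : Real.exp (2 * s) = Real.exp s ^ 2 := by
    rw [two_mul, Real.exp_add]; ring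
  have hrg1 : t ^ (γ - 1) = Real.exp (γ * s) ^ 2 / Real.exp s ^ 2 := by
    rw [Real.rpow_def_of_pos ht,
      show Real.log t * (γ - 1) = 2 * (γ * s) - 2 * s by rw [hs]; ring,
      Real.exp_sub, sqE, sqF]
  have h2s : t = Real.exp s ^ 2 := by
    rw [← Real.exp_nat_mul, hs]
    rw [show (2:ℕ) * (Real.log t / 2) = Real.log t by push_cast; ring, Real.exp_log ht]
  have key := sinh_sq_le γ s hγ
  rw [Real.sinh_eq, Real.sinh_eq, div_pow, div_pow] at key
  set E := Real.exp (γ * s) with hE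
  set F := Real.exp s with hF
  have e1 : 0 < E := Real.exp_pos _
  have e2 : 0 < F := Real.exp_pos _
  have me1 : E * Real.exp (-(γ * s)) = 1 := by rw [hE, ← Real.exp_add]; simp
  have me2 : F * Real.exp (-s) = 1 := by rw [hF, ← Real.exp_add]; simp
  have key' : (E - Real.exp (-(γ * s))) ^ 2 ≤ γ ^ 2 * (F - Real.exp (-s)) ^ 2 := by
    nlinarith [key]
  have hprod := mul_le_mul_of_nonneg_right key'
    (mul_nonneg (sq_nonneg E) (sq_nonneg F) : (0:ℝ) ≤ E ^ 2 * F ^ 2)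
  rw [hrg, hrg1, h2s]
  rw [show γ ^ 2 * (E ^ 2 / F ^ 2) * (F ^ 2 - 1) ^ 2
      = γ ^ 2 * E ^ 2 * (F ^ 2 - 1) ^ 2 / F ^ 2 by ring,
    le_div_iff₀ (by positivity : (0:ℝ) < F ^ 2)]
  have idE : E ^ 2 - 1 = E * (E - Real.exp (-(γ * s))) := by rw [← me1]; ring
  have idF : F ^ 2 - 1 = F * (F - Real.exp (-s)) := by rw [← me2]; ring
  rw [idE, idF]
  nlinarith [hprod]

lemma phi_tendsto (γ : ℝ) :
    Tendsto (fun t : ℝ => (1 - t ^ γ) ^ 2 / (4 * t ^ (γ - 1) * (t - 1) ^ 2))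
      (𝓝[≠] (1:ℝ)) (𝓝 (γ ^ 2 / 4)) := by
  have hd : HasDerivAt (fun x : ℝ => x ^ γ) (γ * (1:ℝ) ^ (γ - 1)) 1 :=
    Real.hasDerivAt_rpow_const (Or.inl one_ne_zero)
  have hslope : Tendsto (fun t : ℝ => (t ^ γ - 1) / (t - 1)) (𝓝[≠] (1:ℝ)) (𝓝 γ) := by
    have := hasDerivAt_iff_tendsto_slope.mp hd
    simp only [Real.one_rpow, mul_one] at this
    refine this.congr (fun t => ?_)
    simp [slope, Real.one_rpow, div_eq_inv_mul]
  have hcont : Tendsto (fun t : ℝ => t ^ (γ - 1)) (𝓝[≠] (1:ℝ)) (𝓝 1) := by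
    have : ContinuousAt (fun t : ℝ => t ^ (γ - 1)) 1 :=
      (Real.continuousAt_rpow_const 1 (γ-1) (Or.inl one_ne_zero))
    have h2 := this.tendsto
    rw [Real.one_rpow] at h2
    exact h2.mono_left nhdsWithin_le_nhds
  have hmain : Tendsto (fun t : ℝ => ((t ^ γ - 1) / (t - 1)) ^ 2 / (4 * t ^ (γ - 1)))
      (𝓝[≠] (1:ℝ)) (𝓝 (γ ^ 2 / 4)) := by
    have h4 : Tendsto (fun t : ℝ => 4 * t ^ (γ - 1)) (𝓝[≠] (1:ℝ)) (𝓝 4) := by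
      have := hcont.const_mul 4
      simpa using this
    have := (hslope.pow 2).div h4 (by norm_num)
    exact this
  refine hmain.congr' ?_
  have hev : ∀ᶠ t in 𝓝[≠] (1:ℝ), (0:ℝ) < t ∧ t ≠ 1 := by
    filter_upwards [eventually_nhdsWithin_of_eventually_nhds (eventually_gt_nhds one_pos),
      self_mem_nhdsWithin] with t h1 h2
    exact ⟨h1, h2⟩
  filter_upwards [hev] with t ⟨ht, ht1⟩
  have h1 : t - 1 ≠ 0 := sub_ne_zero.mpr ht1
  have h2 : (0:ℝ) < t ^ (γ - 1) := Real.rpow_pos_of_pos ht _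
  rw [div_pow, div_div]
  congr 1
  · ring
  · ring

lemma psd_fin_two {a b d : ℝ} :
    (!![a, b; b, d] : Matrix (Fin 2) (Fin 2) ℝ).PosSemidef ↔ 0 ≤ a ∧ 0 ≤ d ∧ b ^ 2 ≤ a * d := by
  constructor
  · intro h
    have key : ∀ x y : ℝ, 0 ≤ a * x ^ 2 + 2 * b * x * y + d * y ^ 2 := by
      intro x y
      have := h.dotProduct_mulVec_nonneg ![x, y]
      simp [dotProduct, Matrix.mulVec, Fin.sum_univ_two] at this
      nlinarith [this]
    have ha := key 1 0
    have hd := key 0 1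
    simp at ha hd
    refine ⟨by linarith, by linarith, ?_⟩
    have h1 := key d (-b)
    have h4 := key (-b) a
    have h2 := key 1 1
    have h3 := key 1 (-1)
    rcases eq_or_lt_of_le ha with h | h
    · rcases eq_or_lt_of_le hd with h' | h'
      · rw [← h, ← h'] at h2 h3 ⊢
        nlinarith [h2, h3]
      · nlinarith [h1, h']
    · nlinarith [h4, h]
  · rintro ⟨ha, hd, hb⟩
    rw [Matrix.posSemidef_iff_dotProduct_mulVec]
    constructor
    · ext i j
      fin_cases i <;> fin_cases j <;> simp [Matrix.conjTranspose_apply]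
    · intro x
      have hx : dotProduct (star x) (Matrix.mulVec (!![a, b; b, d] : Matrix (Fin 2) (Fin 2) ℝ) x)
          = a * x 0 ^ 2 + 2 * b * (x 0) * (x 1) + d * x 1 ^ 2 := by
        simp [dotProduct, Matrix.mulVec, Fin.sum_univ_two]
        ring
      show 0 ≤ dotProduct (star x) (Matrix.mulVec _ x)
      rw [hx]
      rcases eq_or_lt_of_le ha with h | h
      · have hb0 : b = 0 := by nlinarith [hb, sq_nonneg b]
        rw [hb0, ← h]
        nlinarith [sq_nonneg (x 1), hd]
      · nlinarith [sq_nonneg (a * x 0 + b * x 1), mul_nonneg (sub_nonneg.2 hb) (sq_nonneg (x 1)), h]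

lemma clean_aux {γ Γ t : ℝ} (ht : 0 < t) :
    t ^ γ * (1 + Γ * (1 / t - 1)) = t ^ (γ - 1) * (t + Γ * (1 - t)) := by
  have hAB : t ^ (γ - 1) = t ^ γ / t := by rw [Real.rpow_sub ht, Real.rpow_one]
  rw [hAB]
  field_simp

lemma core (γ Γ : ℝ) (hγ : γ ≠ 0) :
    (∀ t : ℝ, 0 < t →
      0 ≤ 1 + Γ * (t - 1) ∧ 0 ≤ t ^ γ * (1 + Γ * (1 / t - 1)) ∧
      (-(1 + t ^ γ) / 2) ^ 2 ≤ (1 + Γ * (t - 1)) * (t ^ γ * (1 + Γ * (1 / t - 1))))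
    ↔ γ ^ 2 / 4 ≤ Γ * (1 - Γ) := by
  constructor
  · intro h
    have key : ∀ᶠ t in 𝓝[≠] (1:ℝ),
        (1 - t ^ γ) ^ 2 / (4 * t ^ (γ - 1) * (t - 1) ^ 2) ≤ Γ * (1 - Γ) := by
      have hev : ∀ᶠ t in 𝓝[≠] (1:ℝ), (0:ℝ) < t ∧ t ≠ 1 := by
        filter_upwards [eventually_nhdsWithin_of_eventually_nhds (eventually_gt_nhds one_pos),
          self_mem_nhdsWithin] with t h1 h2
        exact ⟨h1, h2⟩
      filter_upwards [hev] with t ⟨ht, ht1⟩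
      have hdet := (h t ht).2.2
      rw [clean_aux ht] at hdet
      have hB : (0:ℝ) < t ^ (γ - 1) := Real.rpow_pos_of_pos ht _
      have hAB : t ^ γ = t ^ (γ - 1) * t := by
        rw [Real.rpow_sub ht, Real.rpow_one]
        field_simp
      have h5 : (0:ℝ) < (t - 1) ^ 2 := by
        have := sub_ne_zero.mpr ht1
        positivity
      have h1 : (1 - t ^ γ) ^ 2 ≤ 4 * Γ * (1 - Γ) * (t ^ (γ - 1)) * (t - 1) ^ 2 := by
        nlinarith [hdet, hAB]
      rw [div_le_iff₀ (by positivity)]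
      nlinarith [h1]
    have := le_of_tendsto (phi_tendsto γ) key
    linarith [this]
  · intro hC t ht
    have hg2 : 0 < γ ^ 2 := by positivity
    have hΓΓ : 0 < Γ * (1 - Γ) := by nlinarith
    have hΓ0 : 0 < Γ := by nlinarith [hΓΓ]
    have hΓ1 : Γ < 1 := by nlinarith [hΓΓ]
    have hγ1 : γ ^ 2 ≤ 1 := by nlinarith [sq_nonneg (2 * Γ - 1)]
    have hB : (0:ℝ) < t ^ (γ - 1) := Real.rpow_pos_of_pos ht _
    have hA : (0:ℝ) < t ^ γ := Real.rpow_pos_of_pos ht _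
    have hAB : t ^ γ = t ^ (γ - 1) * t := by
      rw [Real.rpow_sub ht, Real.rpow_one]
      field_simp
    have ht1 : (0:ℝ) < 1 / t := by positivity
    refine ⟨by nlinarith, ?_, ?_⟩
    · have : 0 ≤ 1 + Γ * (1 / t - 1) := by nlinarith
      exact mul_nonneg hA.le this
    · have hkey := rpow_key hγ1 ht
      have h2 : (t ^ γ - 1) ^ 2 ≤ 4 * Γ * (1 - Γ) * (t ^ (γ - 1)) * (t - 1) ^ 2 := by
        nlinarith [hkey, mul_le_mul_of_nonneg_right (by linarith : γ ^ 2 ≤ 4 * (Γ * (1 - Γ)))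
          (mul_nonneg hB.le (sq_nonneg (t - 1)))]
      rw [clean_aux ht]
      nlinarith [h2, hAB]

lemma algebra_iff (n a p : ℝ) (hn0 : 0 < |n|) (ha0 : 0 < a) (ha1 : a ≤ 1) (hp : 1 < p) :
    ((n / a) ^ 2 / 4 ≤ ((1 - a) / (a * (p - 1))) * (1 - (1 - a) / (a * (p - 1)))) ↔
    (|n| ≤ a ∧ Pminus n a ≤ p ∧ p ≤ Pplus n a) := by
  have hn2 : 0 < n ^ 2 := by
    have : n ≠ 0 := abs_pos.mp hn0
    positivity
  set q := p - 1 with hqdef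
  have hq : 0 < q := by rw [hqdef]; linarith
  have haq : (0:ℝ) < a * q := mul_pos ha0 hq
  have haq' : (a * q : ℝ) ≠ 0 := ne_of_gt haq
  have transm : ∀ Y : ℝ, ((1 + (2 / n ^ 2) * (1 - a) * Y ≤ p) ↔ 2 * (1 - a) * Y ≤ n ^ 2 * q) := by
    intro Y
    rw [show (2 / n ^ 2) * (1 - a) * Y = (2 * (1 - a) * Y) / n ^ 2 by ring]
    rw [show (1 + (2 * (1 - a) * Y) / n ^ 2 ≤ p) ↔ ((2 * (1 - a) * Y) / n ^ 2 ≤ q) from by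
      rw [hqdef]; constructor <;> intro <;> linarith]
    rw [div_le_iff₀ hn2]
    constructor <;> intro <;> nlinarith
  have transp : ∀ Y : ℝ, ((p ≤ 1 + (2 / n ^ 2) * (1 - a) * Y) ↔ n ^ 2 * q ≤ 2 * (1 - a) * Y) := by
    intro Y
    rw [show (2 / n ^ 2) * (1 - a) * Y = (2 * (1 - a) * Y) / n ^ 2 by ring]
    rw [show (p ≤ 1 + (2 * (1 - a) * Y) / n ^ 2) ↔ (q ≤ (2 * (1 - a) * Y) / n ^ 2) from by
      rw [hqdef]; constructor <;> intro <;> linarith]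
    rw [le_div_iff₀ hn2]
    constructor <;> intro <;> nlinarith
  have hiff : ((n / a) ^ 2 / 4 ≤ ((1 - a) / (a * q)) * (1 - (1 - a) / (a * q))) ↔
      n ^ 2 * q ^ 2 - 4 * a * (1 - a) * q + 4 * (1 - a) ^ 2 ≤ 0 := by
    rw [show ((1 - a) / (a * q)) * (1 - (1 - a) / (a * q))
        = ((1 - a) * (a * q - (1 - a))) / (a * q) ^ 2 from by
      rw [eq_div_iff (by positivity)]; field_simp,
      show (n / a) ^ 2 / 4 = n ^ 2 / (4 * a ^ 2) from by
      rw [div_eq_div_iff (by norm_num) (by positivity)]; field_simp,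
      div_le_div_iff₀ (by positivity) (by positivity)]
    constructor <;> intro h <;> nlinarith [h, mul_pos ha0 ha0, hq, mul_pos hq hq]
  rw [hiff]
  constructor
  · intro hQ
    have hna : n ^ 2 ≤ a ^ 2 := by
      nlinarith [hQ, sq_nonneg (a * q - 2 * (1 - a)), mul_pos hq hq]
    have habs : |n| ≤ a := by
      have h1 : |n| = Real.sqrt (n ^ 2) := (Real.sqrt_sq_eq_abs n).symm
      rw [h1, show a = Real.sqrt (a ^ 2) from (Real.sqrt_sq ha0.le).symm]
      exact Real.sqrt_le_sqrt hna
    set s := Real.sqrt (a ^ 2 - n ^ 2) with hsdef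
    have hs2 : s ^ 2 = a ^ 2 - n ^ 2 := Real.sq_sqrt (by linarith)
    have hs2' : (1 - a) ^ 2 * s ^ 2 = (1 - a) ^ 2 * (a ^ 2 - n ^ 2) := by rw [hs2]
    have hs0 : 0 ≤ s := Real.sqrt_nonneg _
    have hfac : (n ^ 2 * q - 2 * (1 - a) * (a - s)) * (n ^ 2 * q - 2 * (1 - a) * (a + s)) ≤ 0 := by
      nlinarith [mul_le_mul_of_nonneg_left hQ hn2.le, hs2']
    have h2 : 0 ≤ (1 - a) * s := mul_nonneg (by linarith) hs0
    refine ⟨habs, ?_, ?_⟩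
    · rw [Pminus, transm]
      by_contra hcon
      push_neg at hcon
      nlinarith [hfac, hcon, h2]
    · rw [Pplus, transp]
      by_contra hcon
      push_neg at hcon
      nlinarith [hfac, hcon, h2]
  · rintro ⟨habs, hm, hP⟩
    have hna : n ^ 2 ≤ a ^ 2 := by
      nlinarith [mul_self_le_mul_self (abs_nonneg n) habs, sq_abs n]
    set s := Real.sqrt (a ^ 2 - n ^ 2) with hsdef
    have hs2 : s ^ 2 = a ^ 2 - n ^ 2 := Real.sq_sqrt (by linarith)
    have hs2' : (1 - a) ^ 2 * s ^ 2 = (1 - a) ^ 2 * (a ^ 2 - n ^ 2) := by rw [hs2]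
    have hs0 : 0 ≤ s := Real.sqrt_nonneg _
    rw [Pminus, transm] at hm
    rw [Pplus, transp] at hP
    nlinarith [mul_nonneg (sub_nonneg.mpr hm) (sub_nonneg.mpr hP), hs2', hn2]

lemma psd_smul {M : Matrix (Fin 2) (Fin 2) ℝ} (h : M.PosSemidef) {c : ℝ} (hc : 0 ≤ c) :
    (c • M).PosSemidef := by
  refine Matrix.posSemidef_iff_dotProduct_mulVec.mpr ⟨?_, fun x => ?_⟩
  · show (c • M).conjTranspose = c • M
    rw [Matrix.conjTranspose_smul]
    simp only [star_trivial]
    rw [h.1]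
  · rw [Matrix.smul_mulVec, dotProduct_smul]
    exact mul_nonneg hc (h.dotProduct_mulVec_nonneg x)

lemma psd_smul_iff {M : Matrix (Fin 2) (Fin 2) ℝ} {c : ℝ} (hc : 0 < c) :
    (c • M).PosSemidef ↔ M.PosSemidef := by
  constructor
  · intro h
    have := psd_smul h (inv_nonneg.mpr hc.le)
    rwa [smul_smul, inv_mul_cancel₀ hc.ne', one_smul] at this
  · intro h
    exact psd_smul h hc.le

lemma smul_fin_two (c a b b' d : ℝ) :
    c • (!![a, b; b', d] : Matrix (Fin 2) (Fin 2) ℝ) = !![c*a, c*b; c*b', c*d] := by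
  ext i j
  fin_cases i <;> fin_cases j <;> simp [Matrix.smul_apply]

lemma qmat_scale (n a p : ℝ) (hne : ¬(a = 1 ∧ p = 1)) {u v : ℝ} (hu : 0 < u) (hv : 0 < v) :
    Qmat n a p v u = v ^ (n / a) • Qmat n a p 1 (u / v) := by
  rw [Qmat, Qmat, if_neg hne, if_neg hne, smul_comm]
  congr 1
  have hvγ : (0:ℝ) < v ^ (n / a) := Real.rpow_pos_of_pos hv _
  have hdiv : (u / v) ^ (n / a) = u ^ (n / a) / v ^ (n / a) := Real.div_rpow hu.le hv.le _
  rw [smul_fin_two]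
  have e1 : v ^ (n / a) * (1 ^ (n / a) * (1 + (1 - a) / (a * (p - 1)) * (u / v / 1 - 1)))
      = v ^ (n / a) * (1 + (1 - a) / (a * (p - 1)) * (u / v - 1)) := by
    rw [Real.one_rpow, div_one, one_mul]
  have e2 : v ^ (n / a) * (-(1 ^ (n / a) + (u / v) ^ (n / a)) / 2)
      = -(v ^ (n / a) + u ^ (n / a)) / 2 := by
    rw [Real.one_rpow, hdiv]
    field_simp
  have e3 : v ^ (n / a) * ((u / v) ^ (n / a) * (1 + (1 - a) / (a * (p - 1)) * (1 / (u / v) - 1)))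
      = u ^ (n / a) * (1 + (1 - a) / (a * (p - 1)) * (v / u - 1)) := by
    rw [hdiv, one_div_div, ← mul_assoc, mul_div_cancel₀ _ (ne_of_gt hvγ)]
  rw [e1, e2, e3]

lemma qmat_psd_iff (n a p : ℝ) (hp : 1 < p) (hne : ¬(a = 1 ∧ p = 1)) (t : ℝ) :
    (Qmat n a p 1 t).PosSemidef ↔
      (0 ≤ 1 + ((1 - a) / (a * (p - 1))) * (t - 1) ∧
       0 ≤ t ^ (n / a) * (1 + ((1 - a) / (a * (p - 1))) * (1 / t - 1)) ∧
       (-(1 + t ^ (n / a)) / 2) ^ 2 ≤ (1 + ((1 - a) / (a * (p - 1))) * (t - 1)) *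
         (t ^ (n / a) * (1 + ((1 - a) / (a * (p - 1))) * (1 / t - 1)))) := by
  rw [Qmat, if_neg hne, psd_smul_iff (by linarith : (0:ℝ) < p - 1)]
  simp only [Real.one_rpow, div_one, one_mul]
  exact psd_fin_two

/-- for `0 < |n| < 1`, `α ∈ (0,1]` and `p > 1`, the matrix `Q_{α,p}(v,u)`
is positive semidefinite for all `u, v > 0` if and only if `(α,p) ∈ K_{|n|}`. -/
theorem Qmat_posSemidef_iff (n α p : ℝ) (hn0 : 0 < |n|) (hn1 : |n| < 1)
    (hα : α ∈ Ioc (0:ℝ) 1) (hp : 1 < p) :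
    (∀ u v : ℝ, 0 < u → 0 < v → (Qmat n α p v u).PosSemidef) ↔ (α, p) ∈ Kset n := by
  obtain ⟨hα0, hα1⟩ := hα
  have hn : n ≠ 0 := abs_pos.mp hn0
  have hne : ¬(α = 1 ∧ p = 1) := by rintro ⟨-, h⟩; linarith
  have hγne : n / α ≠ 0 := div_ne_zero hn (ne_of_gt hα0)
  have hKmem : ((α, p) ∈ Kset n) ↔ (|n| ≤ α ∧ Pminus n α ≤ p ∧ p ≤ Pplus n α) := by
    rw [Kset, if_neg hn]
    simp only [Set.mem_setOf_eq]
    constructor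
    · rintro ⟨h1, h2, h3, h4⟩; exact ⟨h1, h3, h4⟩
    · rintro ⟨h1, h3, h4⟩; exact ⟨h1, hα1, h3, h4⟩
  rw [hKmem, ← algebra_iff n α p hn0 hα0 hα1 hp,
    ← core (n / α) ((1 - α) / (α * (p - 1))) hγne]
  constructor
  · intro H t ht
    have h := H t 1 ht one_pos
    rwa [qmat_psd_iff n α p hp hne t] at h
  · intro H u v hu hv
    rw [qmat_scale n α p hne hu hv]
    exact psd_smul ((qmat_psd_iff n α p hp hne (u / v)).mpr
      (H (u / v) (div_pos hu hv))) (Real.rpow_pos_of_pos hv _).le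

end
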